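/- Let N be a positive integer and let U, V be unitary N×N complex matrices with U^N = I, V^N = I and VU = e^{2πi/N}·UV, such that the subalgebra of M_N(ℂ) generated by U and V is all of M_N(ℂ). Then there exists a unitary N×N matrix Z such that Zᴴ U Z = T₁ and Zᴴ V Z = M₁, where T₁ is the cyclic shift matrix acting on ℂ^N (identified with functions on ZMod N) by (T₁f)(j) = f(j−1), and M₁ is the diagonal matrix with diagonal entries e^{2πij/N} for j = 0, 1, ..., N−1. -/

import Mathlib

open Complex Matrix

/-- The cyclic shift matrix `T₁` on `ℂ^N ≅ (ZMod N → ℂ)`, acting by `(T₁f)(j) = f(j−1)`. -/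
noncomputable def shiftMatrix (N : ℕ) : Matrix (ZMod N) (ZMod N) ℂ :=
  Matrix.of fun j l => if l = j - 1 then 1 else 0

/-- The modulation matrix `M₁`, the diagonal matrix with entries `e^{2πij/N}`,
`j = 0, 1, ..., N−1`. -/
noncomputable def modMatrix (N : ℕ) : Matrix (ZMod N) (ZMod N) ℂ :=
  Matrix.diagonal fun j => Complex.exp (2 * Real.pi * Complex.I * ((j.val : ℂ) / (N : ℂ)))

lemma weyl_pow_mod {n : Type*} [Fintype n] [DecidableEq n] (A : Matrix n n ℂ) (N : ℕ)
    (h : A ^ N = 1) (a : ℕ) : A ^ a = A ^ (a % N) := by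
  conv_lhs => rw [← Nat.mod_add_div a N, pow_add, pow_mul, h, one_pow, mul_one]

lemma weyl_inner_preserved {n : Type*} [Fintype n] [DecidableEq n] (A : Matrix n n ℂ)
    (hA : Aᴴ * A = 1) (w w' : n → ℂ) :
    star (A *ᵥ w) ⬝ᵥ (A *ᵥ w') = star w ⬝ᵥ w' := by
  rw [star_mulVec, dotProduct_mulVec, vecMul_vecMul, hA, vecMul_one]

lemma weyl_comm_pow {n : Type*} [Fintype n] [DecidableEq n] (U V : Matrix n n ℂ) (ω : ℂ)
    (h : V * U = ω • (U * V)) (m : ℕ) : V * U ^ m = ω ^ m • (U ^ m * V) := by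
  induction m with
  | zero => simp
  | succ m ih =>
    rw [pow_succ, ← mul_assoc, ih, smul_mul_assoc, mul_assoc, h, pow_succ]
    rw [Matrix.mul_smul, smul_smul, mul_assoc]

/-- **Weyl's theorem**: if `U, V` are unitary `N×N` matrices with `U^N = 1`, `V^N = 1` and
`VU = e^{2πi/N}·UV`, generating all of `M_N(ℂ)` as an algebra, then there is a unitary `Z`
with `Zᴴ U Z = T₁` and `Zᴴ V Z = M₁`. -/
theorem weyl_uniqueness (N : ℕ) [NeZero N] (U V : Matrix (ZMod N) (ZMod N) ℂ)
    (hU : U ∈ Matrix.unitaryGroup (ZMod N) ℂ) (hV : V ∈ Matrix.unitaryGroup (ZMod N) ℂ)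
    (hUN : U ^ N = 1) (hVN : V ^ N = 1)
    (hcomm : V * U = Complex.exp (2 * Real.pi * Complex.I / (N : ℂ)) • (U * V))
    (hgen : Algebra.adjoin ℂ ({U, V} : Set (Matrix (ZMod N) (ZMod N) ℂ)) = ⊤) :
    ∃ Z ∈ Matrix.unitaryGroup (ZMod N) ℂ,
      Zᴴ * U * Z = shiftMatrix N ∧ Zᴴ * V * Z = modMatrix N := by
  set ω : ℂ := Complex.exp (2 * Real.pi * Complex.I / (N : ℂ)) with hωdef
  have hω : IsPrimitiveRoot ω N := Complex.isPrimitiveRoot_exp N (NeZero.ne N)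
  have hωN : ω ^ N = 1 := hω.pow_eq_one
  have habsω : ‖ω‖ = 1 := by
    rw [hωdef]
    rw [Complex.norm_exp]
    norm_num [Complex.div_re, Complex.mul_I_re]
  -- conj ω^a * ω^a = 1
  have hconj : ∀ a : ℕ, (starRingEnd ℂ) (ω ^ a) * ω ^ a = 1 := by
    intro a
    have ha : ‖ω ^ a‖ = 1 := by rw [norm_pow, habsω, one_pow]
    rw [mul_comm, Complex.mul_conj, Complex.normSq_eq_norm_sq, ha]
    norm_num
  -- unitarity of powers of U
  have hUm : ∀ m : ℕ, (U ^ m)ᴴ * (U ^ m) = 1 := by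
    intro m
    have : U ^ m ∈ Matrix.unitaryGroup (ZMod N) ℂ := pow_mem hU m
    simpa [Matrix.star_eq_conjTranspose] using (Matrix.mem_unitaryGroup_iff'.mp this)
  have hV1 : Vᴴ * V = 1 := by
    simpa [Matrix.star_eq_conjTranspose] using (Matrix.mem_unitaryGroup_iff'.mp hV)
  -- find eigenvector of V
  obtain ⟨μ, hμ⟩ := Module.End.exists_eigenvalue (Matrix.mulVecLin V)
  obtain ⟨x, hx⟩ := hμ.exists_hasEigenvector
  have hVx : V *ᵥ x = μ • x := by
    have := Module.End.mem_eigenspace_iff.mp hx.1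
    simpa using this
  have hx0 : x ≠ 0 := hx.2
  -- μ ^ N = 1
  have hpow : ∀ m : ℕ, (V ^ m) *ᵥ x = μ ^ m • x := by
    intro m
    induction m with
    | zero => simp
    | succ m ih =>
      rw [pow_succ, ← mulVec_mulVec, hVx, mulVec_smul, ih, smul_smul, pow_succ, mul_comm]
  have hμN : μ ^ N = 1 := by
    have h1 : μ ^ N • x = x := by rw [← hpow, hVN, one_mulVec]
    have h2 : (μ ^ N - 1) • x = 0 := by rw [sub_smul, one_smul, h1, sub_self]
    rcases smul_eq_zero.mp h2 with h | h
    · exact sub_eq_zero.mp h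
    · exact absurd h hx0
  obtain ⟨k, hk, hμk⟩ := hω.eq_pow_of_pow_eq_one hμN
  -- shift to eigenvalue 1
  set y : ZMod N → ℂ := (U ^ (N - k)) *ᵥ x with hydef
  have hVy : V *ᵥ y = y := by
    rw [hydef, mulVec_mulVec, weyl_comm_pow U V ω hcomm, smul_mulVec,
      ← mulVec_mulVec, hVx, mulVec_smul, ← hμk, smul_smul, ← pow_add,
      Nat.sub_add_cancel (le_of_lt hk), hωN, one_smul]
  have hy0 : y ≠ 0 := by
    intro h
    apply hx0
    have : ((U ^ (N - k))ᴴ * (U ^ (N - k))) *ᵥ x = (U ^ (N - k))ᴴ *ᵥ y := by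
      rw [hydef, mulVec_mulVec]
    rw [hUm, one_mulVec, h, mulVec_zero] at this
    exact this
  -- normalize y
  set r : ℝ := ∑ l, Complex.normSq (y l) with hrdef
  have hyy : star y ⬝ᵥ y = (r : ℂ) := by
    rw [hrdef]
    push_cast
    simp only [dotProduct, Pi.star_apply, RCLike.star_def]
    exact Finset.sum_congr rfl fun l _ => by
      rw [mul_comm, Complex.mul_conj]
  have hr0 : 0 < r := by
    obtain ⟨l, hl⟩ := Function.ne_iff.mp hy0
    exact Finset.sum_pos' (fun i _ => Complex.normSq_nonneg _)
      ⟨l, Finset.mem_univ l, Complex.normSq_pos.mpr hl⟩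
  set v₀ : ZMod N → ℂ := ((Real.sqrt r : ℝ)⁻¹ : ℂ) • y with hv₀def
  have hv₀v₀ : star v₀ ⬝ᵥ v₀ = 1 := by
    rw [hv₀def, star_smul, smul_dotProduct, dotProduct_smul, hyy, smul_eq_mul, smul_eq_mul]
    rw [star_inv₀]
    have : (starRingEnd ℂ) ((Real.sqrt r : ℝ) : ℂ) = ((Real.sqrt r : ℝ) : ℂ) := by
      exact Complex.conj_ofReal _
    rw [show star ((Real.sqrt r : ℝ) : ℂ) = ((Real.sqrt r : ℝ) : ℂ) from this]
    rw [← mul_assoc, ← mul_inv]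
    norm_cast
    rw [Real.mul_self_sqrt hr0.le]
    field_simp
  have hVv₀ : V *ᵥ v₀ = v₀ := by
    rw [hv₀def, mulVec_smul, hVy]
  -- the orthonormal system
  set xv : ZMod N → ZMod N → ℂ := fun j => (U ^ (j.val)) *ᵥ v₀ with hxvdef
  have hUxv : ∀ j : ZMod N, U *ᵥ xv j = xv (j + 1) := by
    intro j
    rw [hxvdef]
    simp only
    rw [mulVec_mulVec, ← pow_succ']
    congr 1
    rw [weyl_pow_mod U N hUN (j.val + 1), weyl_pow_mod U N hUN (j + 1).val]
    congr 1
    rw [ZMod.val_add, ZMod.val_one_eq_one_mod, Nat.add_mod j.val 1 N,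
      Nat.mod_eq_of_lt (ZMod.val_lt j), Nat.mod_mod_of_dvd _ dvd_rfl]
  have hVxv : ∀ j : ZMod N, V *ᵥ xv j = ω ^ j.val • xv j := by
    intro j
    rw [hxvdef]
    simp only
    rw [mulVec_mulVec, weyl_comm_pow U V ω hcomm, smul_mulVec, ← mulVec_mulVec, hVv₀]
  have hinner : ∀ i j : ZMod N, star (xv i) ⬝ᵥ xv j = if i = j then 1 else 0 := by
    intro i j
    by_cases hij : i = j
    · subst hij
      rw [if_pos rfl]
      rw [hxvdef]
      simp only
      rw [weyl_inner_preserved _ (hUm i.val), hv₀v₀]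
    · simp only [if_neg hij]
      have h1 : star (V *ᵥ xv i) ⬝ᵥ (V *ᵥ xv j) = star (xv i) ⬝ᵥ xv j :=
        weyl_inner_preserved V hV1 _ _
      rw [hVxv, hVxv, star_smul, smul_dotProduct, dotProduct_smul, smul_eq_mul, smul_eq_mul,
        ← mul_assoc] at h1
      have hc : (star (ω ^ i.val) * ω ^ j.val) ≠ 1 := by
        intro hc
        apply hij
        have : ω ^ i.val = ω ^ j.val := by
          have := congrArg (fun z => ω ^ i.val * z) hc
          simp only [mul_one] at this
          rw [← mul_assoc] at this
          rw [show ω ^ i.val * star (ω ^ i.val) = 1 by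
            rw [mul_comm]; exact hconj i.val] at this
          rw [one_mul] at this
          exact this.symm
        exact ZMod.val_injective N (hω.pow_inj (ZMod.val_lt i) (ZMod.val_lt j) this)
      have h2 : (star (ω ^ i.val) * ω ^ j.val - 1) * (star (xv i) ⬝ᵥ xv j) = 0 := by
        linear_combination h1
      rcases mul_eq_zero.mp h2 with h | h
      · exact absurd (sub_eq_zero.mp h) hc
      · exact h
  -- the unitary Z
  set Z : Matrix (ZMod N) (ZMod N) ℂ := Matrix.of fun i j => xv j i with hZdef
  have hZstar : Zᴴ * Z = 1 := by
    ext i j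
    rw [Matrix.mul_apply, Matrix.one_apply]
    have : ∑ l, Zᴴ i l * Z l j = star (xv i) ⬝ᵥ xv j := by
      rw [dotProduct]
      exact Finset.sum_congr rfl fun l _ => by
        rw [hZdef, Matrix.conjTranspose_apply]
        rfl
    rw [this, hinner]
  have hZmem : Z ∈ Matrix.unitaryGroup (ZMod N) ℂ := by
    rw [Matrix.mem_unitaryGroup_iff']
    simpa [Matrix.star_eq_conjTranspose] using hZstar
  have hUZ : U * Z = Z * shiftMatrix N := by
    ext i j
    rw [Matrix.mul_apply, Matrix.mul_apply]
    have lhs : ∑ l, U i l * Z l j = (U *ᵥ xv j) i := by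
      rw [mulVec, dotProduct]; rfl
    rw [lhs, hUxv]
    have : ∀ l : ZMod N, Z i l * shiftMatrix N l j = if l = j + 1 then xv (j + 1) i else 0 := by
      intro l
      rw [hZdef, shiftMatrix]
      simp only [Matrix.of_apply]
      by_cases h : l = j + 1
      · subst h; rw [if_pos (by ring), if_pos rfl, mul_one]
      · rw [if_neg (fun hh => h (by rw [hh]; ring)), if_neg h, mul_zero]
    rw [Finset.sum_congr rfl fun l _ => this l, Finset.sum_ite_eq' Finset.univ (j + 1)]
    simp
  have hVZ : V * Z = Z * modMatrix N := by
    ext i j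
    rw [Matrix.mul_apply, modMatrix, Matrix.mul_diagonal]
    have lhs : ∑ l, V i l * Z l j = (V *ᵥ xv j) i := by
      rw [mulVec, dotProduct]; rfl
    rw [lhs, hVxv]
    have : ω ^ j.val = Complex.exp (2 * Real.pi * Complex.I * ((j.val : ℂ) / (N : ℂ))) := by
      rw [hωdef, ← Complex.exp_nat_mul]
      congr 1
      field_simp
    simp only [Pi.smul_apply, smul_eq_mul]
    rw [this, hZdef]
    rw [mul_comm]
    rfl
  refine ⟨Z, hZmem, ?_, ?_⟩
  · rw [mul_assoc, hUZ, ← mul_assoc, hZstar, one_mul]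
  · rw [mul_assoc, hVZ, ← mul_assoc, hZstar, one_mul]
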